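/- Let A be a bicomplete abelian category (having all small limits and colimits), and let (𝒳, 𝒴) be a cotorsion pair of chain complexes over A, meaning 𝒳 = { X : Ext^1(X,Y) = 0 for all Y ∈ 𝒴 } and 𝒴 = { Y : Ext^1(X,Y) = 0 for all X ∈ 𝒳 }, where Ext^1 is computed in the abelian category Ch(A) of chain complexes over A. Let 𝒞 be a class of objects of A. If the sphere complexes S^n(C) lie in 𝒳 for every integer n and every C ∈ 𝒞, then every bounded below chain complex all of whose components lie in 𝒞 is also in 𝒳. -/

import Mathlib

/-!
STATEMENT 4: Let `A` be a bicomplete abelian category and `(𝒳, 𝒴)` a cotorsion pair in the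
category of `ℤ`-indexed chain complexes over `A` (each class is the `Ext¹`-orthogonal of the
other, `Ext¹` computed in `Ch(A)`).  Let `𝒞` be a class of objects of `A`.  If `S^n C ∈ 𝒳`
for all `n : ℤ` and `C ∈ 𝒞`, then every bounded below complex with components in `𝒞` is in `𝒳`.

The vanishing of the (Yoneda) group `Ext¹(A, B)` is expressed by the (equivalent)
statement that every short exact sequence `0 → B → E → A → 0` splits.
-/

universe v u

open CategoryTheory Limits

/-- Vanishing of (Yoneda) `Ext¹(A, B)` in an abelian category: every short exact
sequence `0 → B → E → A → 0` splits. -/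
def Ext1Vanishes {C : Type*} [Category C] [Abelian C] (A B : C) : Prop :=
  ∀ (E : C) (f : B ⟶ E) (g : E ⟶ A) (w : f ≫ g = 0),
    (ShortComplex.mk f g w).ShortExact → ∃ s : A ⟶ E, s ≫ g = 𝟙 A

variable (A : Type u) [Category.{v} A] [Abelian A]

/-- The sphere complex `S^n C`: `C` concentrated in degree `n`. -/
noncomputable def sphere (n : ℤ) (C : A) : ChainComplex A ℤ :=
  (HomologicalComplex.single A (ComplexShape.down ℤ) n).obj C

namespace CotorsionAux

open HomologicalComplex

variable {V : Type u} [Category.{v} V] [Abelian V]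

lemma d_eq_d_comp {ι : Type*} {c : ComplexShape ι} (K : HomologicalComplex V c)
    {i j j' : ι} (h : j = j') :
    K.d i j' = K.d i j ≫ eqToHom (congrArg K.X h) := by subst h; simp

section Modify

variable (L : ChainComplex V ℤ) (n : ℤ) (M : V)

/-- Objects of the modified complex: `L` with degree `n` replaced by `M`. -/
def QX (k : ℤ) : V := if k = n then M else L.X k

lemma QX_eq {k : ℤ} (h : k = n) : QX L n M k = M := if_pos h
lemma QX_ne {k : ℤ} (h : k ≠ n) : QX L n M k = L.X k := if_neg h

variable (dIn : L.X (n+1) ⟶ M) (dOut : M ⟶ L.X (n-1))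

/-- Differentials of the modified complex. -/
noncomputable def Qd (i j : ℤ) : QX L n M i ⟶ QX L n M j :=
  if hij : j + 1 = i then
    if hi : i = n then
      eqToHom (QX_eq L n M hi) ≫ dOut ≫
        eqToHom ((congrArg L.X (show (n:ℤ)-1 = j by omega)).trans
          (QX_ne L n M (show j ≠ n by omega)).symm)
    else if hj : j = n then
      eqToHom ((QX_ne L n M hi).trans (congrArg L.X (show i = n+1 by omega))) ≫ dIn ≫
        eqToHom (QX_eq L n M hj).symm
    else
      eqToHom (QX_ne L n M hi) ≫ L.d i j ≫ eqToHom (QX_ne L n M hj).symm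
  else 0

variable (h1 : L.d (n+2) (n+1) ≫ dIn = 0) (h2 : dIn ≫ dOut = 0)
  (h3 : dOut ≫ L.d (n-1) (n-2) = 0)

/-- The modified complex. -/
@[reducible]
noncomputable def Q : ChainComplex V ℤ where
  X := QX L n M
  d := Qd L n M dIn dOut
  shape i j hij := dif_neg (by simpa using hij)
  d_comp_d' i j k hij hjk := by
    simp only [ComplexShape.down_Rel] at hij hjk
    rw [Qd, dif_pos hij, Qd, dif_pos hjk]
    by_cases hi : i = n
    · subst hi
      obtain rfl : j = i - 1 := by omega
      obtain rfl : k = i - 2 := by omega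
      rw [dif_pos rfl, dif_neg (show ¬(i - 1 = i) by omega),
        dif_neg (show ¬(i - 2 = i) by omega)]
      simp only [Category.assoc, eqToHom_trans_assoc, eqToHom_refl, Category.id_comp]
      rw [reassoc_of% h3]
      simp
    · by_cases hj : j = n
      · subst hj
        obtain rfl : i = j + 1 := by omega
        obtain rfl : k = j - 1 := by omega
        rw [dif_neg hi, dif_pos rfl, dif_pos rfl]
        simp only [Category.assoc, eqToHom_trans_assoc, eqToHom_refl, Category.id_comp]
        rw [reassoc_of% h2]
        simp
      · by_cases hk : k = n
        · subst hk
          obtain rfl : j = k + 1 := by omega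
          obtain rfl : i = k + 2 := by omega
          rw [dif_neg hi, dif_neg hj, dif_neg hj, dif_pos rfl]
          simp only [Category.assoc, eqToHom_trans_assoc, eqToHom_refl, Category.id_comp]
          rw [reassoc_of% h1]
          simp
        · rw [dif_neg hi, dif_neg hj, dif_neg hj, dif_neg hk]
          simp

end Modify
section Modify2

variable (L : ChainComplex V ℤ) (n : ℤ) (M : V)
  (dIn : L.X (n+1) ⟶ M) (dOut : M ⟶ L.X (n-1))
  (h1 : L.d (n+2) (n+1) ≫ dIn = 0) (h2 : dIn ≫ dOut = 0)
  (h3 : dOut ≫ L.d (n-1) (n-2) = 0)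

/-- The inclusion of `L` into the modified complex. -/
noncomputable def Qι (φ : L.X n ⟶ M) (hφ1 : L.d (n+1) n ≫ φ = dIn)
    (hφ2 : φ ≫ dOut = L.d n (n-1)) : L ⟶ Q L n M dIn dOut h1 h2 h3 where
  f k :=
    if hk : k = n then
      eqToHom (congrArg L.X hk) ≫ φ ≫ eqToHom (QX_eq L n M hk).symm
    else eqToHom (QX_ne L n M hk).symm
  comm' i j hij := by
    simp only [ComplexShape.down_Rel] at hij
    show _ ≫ Qd L n M dIn dOut i j = _
    rw [Qd, dif_pos hij]
    dsimp only
    by_cases hi : i = n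
    · subst hi
      obtain rfl : j = i - 1 := by omega
      rw [dif_pos rfl, dif_pos rfl, dif_neg (show ¬(i - 1 = i) by omega)]
      simp only [Category.assoc, eqToHom_trans_assoc, eqToHom_refl, Category.id_comp,
        eqToHom_trans]
      rw [reassoc_of% hφ2]
    · by_cases hj : j = n
      · subst hj
        obtain rfl : i = j + 1 := by omega
        rw [dif_neg hi, dif_pos rfl, dif_neg hi, dif_pos rfl]
        simp only [Category.assoc, eqToHom_trans_assoc, eqToHom_refl, Category.id_comp]
        rw [reassoc_of% hφ1]
      · rw [dif_neg hi, dif_neg hj, dif_neg hi, dif_neg hj]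
        simp

/-- The projection from the modified complex onto the single complex in degree `n`. -/
noncomputable def Qπ (C : V) (ψ : M ⟶ C) (hψ : dIn ≫ ψ = 0) :
    Q L n M dIn dOut h1 h2 h3 ⟶ (single V (ComplexShape.down ℤ) n).obj C where
  f k :=
    if hk : k = n then
      eqToHom (QX_eq L n M hk) ≫ ψ ≫ (singleObjXSelf (ComplexShape.down ℤ) n C).inv ≫
        eqToHom (congrArg (((single V (ComplexShape.down ℤ) n).obj C).X) hk.symm)
    else 0
  comm' i j hij := by
    simp only [ComplexShape.down_Rel] at hij
    rw [single_obj_d, comp_zero]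
    symm
    show Qd L n M dIn dOut i j ≫ _ = _
    rw [Qd, dif_pos hij]
    dsimp only
    by_cases hj : j = n
    · subst hj
      obtain rfl : i = j + 1 := by omega
      rw [dif_neg (show ¬(j + 1 = j) by omega), dif_pos rfl, dif_pos rfl]
      simp only [Category.assoc, eqToHom_trans_assoc, eqToHom_refl, Category.id_comp]
      rw [reassoc_of% hψ]
      simp
    · rw [dif_neg hj]
      by_cases hi : i = n
      · rw [dif_pos hi]
        simp
      · rw [dif_neg hi, dif_neg hj]
        simp

lemma Qι_f (φ : L.X n ⟶ M) (hφ1 : L.d (n+1) n ≫ φ = dIn)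
    (hφ2 : φ ≫ dOut = L.d n (n-1)) (k : ℤ) :
    (Qι L n M dIn dOut h1 h2 h3 φ hφ1 hφ2).f k =
      if hk : k = n then eqToHom (congrArg L.X hk) ≫ φ ≫ eqToHom (QX_eq L n M hk).symm
      else eqToHom (QX_ne L n M hk).symm := rfl

lemma Qπ_f (C : V) (ψ : M ⟶ C) (hψ : dIn ≫ ψ = 0) (k : ℤ) :
    (Qπ L n M dIn dOut h1 h2 h3 C ψ hψ).f k =
      if hk : k = n then
        eqToHom (QX_eq L n M hk) ≫ ψ ≫ (singleObjXSelf (ComplexShape.down ℤ) n C).inv ≫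
          eqToHom (congrArg (((single V (ComplexShape.down ℤ) n).obj C).X) hk.symm)
      else 0 := rfl

lemma Qι_Qπ (φ : L.X n ⟶ M) (hφ1 : L.d (n+1) n ≫ φ = dIn)
    (hφ2 : φ ≫ dOut = L.d n (n-1)) (C : V) (ψ : M ⟶ C) (hψ : dIn ≫ ψ = 0)
    (hφψ : φ ≫ ψ = 0) : Qι L n M dIn dOut h1 h2 h3 φ hφ1 hφ2 ≫ Qπ L n M dIn dOut h1 h2 h3 C ψ hψ = 0 := by
  apply HomologicalComplex.hom_ext
  intro k
  rw [HomologicalComplex.comp_f, Qι_f, Qπ_f]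
  by_cases hk : k = n
  · subst hk
    rw [dif_pos rfl, dif_pos rfl]
    simp only [Category.assoc, eqToHom_trans_assoc, eqToHom_refl, Category.id_comp]
    rw [reassoc_of% hφψ]
    simp
  · rw [dif_neg hk, dif_neg hk]
    simp

lemma Q_shortExact (φ : L.X n ⟶ M) (hφ1 : L.d (n+1) n ≫ φ = dIn)
    (hφ2 : φ ≫ dOut = L.d n (n-1)) (C : V) (ψ : M ⟶ C) (hψ : dIn ≫ ψ = 0)
    (hφψ : φ ≫ ψ = 0) (hdegn : (ShortComplex.mk φ ψ hφψ).ShortExact) :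
    (ShortComplex.mk _ _ (Qι_Qπ L n M dIn dOut h1 h2 h3 φ hφ1 hφ2 C ψ hψ hφψ)).ShortExact := by
  rw [HomologicalComplex.shortExact_iff_degreewise_shortExact]
  intro k
  by_cases hk : k = n
  · subst hk
    refine ShortComplex.shortExact_of_iso ?_ hdegn
    refine ShortComplex.isoMk (Iso.refl _) (eqToIso (QX_eq L k M rfl).symm)
      (singleObjXSelf (ComplexShape.down ℤ) k C).symm ?_ ?_
    · show 𝟙 (L.X k) ≫ (Qι L k M dIn dOut h1 h2 h3 φ hφ1 hφ2).f k = φ ≫ eqToHom (QX_eq L k M rfl).symm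
      rw [Qι_f, dif_pos rfl]
      simp
    · show eqToHom (QX_eq L k M rfl).symm ≫ (Qπ L k M dIn dOut h1 h2 h3 C ψ hψ).f k =
        ψ ≫ (singleObjXSelf (ComplexShape.down ℤ) k C).inv
      rw [Qπ_f, dif_pos rfl]
      simp
  · apply ShortComplex.Splitting.shortExact
    exact
      { r := eqToHom (QX_ne L n M hk)
        s := 0
        f_r := by
          show (Qι L n M dIn dOut h1 h2 h3 φ hφ1 hφ2).f k ≫ eqToHom (QX_ne L n M hk) = 𝟙 _
          rw [Qι_f, dif_neg hk]
          simp
        s_g := (isZero_single_obj_X (ComplexShape.down ℤ) n C k hk).eq_of_src _ _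
        id := by
          show (eqToHom (QX_ne L n M hk) : (Q L n M dIn dOut h1 h2 h3).X k ⟶ L.X k) ≫
            (Qι L n M dIn dOut h1 h2 h3 φ hφ1 hφ2).f k +
            (Qπ L n M dIn dOut h1 h2 h3 C ψ hψ).f k ≫
              (0 : ((single V (ComplexShape.down ℤ) n).obj C).X k ⟶ (Q L n M dIn dOut h1 h2 h3).X k) =
              𝟙 ((Q L n M dIn dOut h1 h2 h3).X k)
          rw [Qι_f, Qπ_f, dif_neg hk, dif_neg hk]
          simp }

end Modify2

/-- Vanishing of (Yoneda) `Ext¹(A, B)` (local copy matching the pinned definition). -/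
def Ext1Vanishes' {C : Type*} [Category C] [Abelian C] (A B : C) : Prop :=
  ∀ (E : C) (f : B ⟶ E) (g : E ⟶ A) (w : f ≫ g = 0),
    (ShortComplex.mk f g w).ShortExact → ∃ s : A ⟶ E, s ≫ g = 𝟙 A

/-- The inductive step: a partial splitting in degrees `< n` extends to degree `n`,
using `Ext¹`-vanishing against the sphere `S^n (X.X n)`. -/
lemma key_step (X E L : ChainComplex V ℤ) (f : L ⟶ E) (g : E ⟶ X) (w : f ≫ g = 0)
    (hSE : (ShortComplex.mk f g w).ShortExact) (n : ℤ)
    (hext : Ext1Vanishes' ((single V (ComplexShape.down ℤ) n).obj (X.X n)) L)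
    (s1 : X.X (n-1) ⟶ E.X (n-1)) (s2 : X.X (n-1-1) ⟶ E.X (n-1-1))
    (hs1 : s1 ≫ g.f (n-1) = 𝟙 _)
    (hs12 : s1 ≫ E.d (n-1) (n-1-1) = X.d (n-1) (n-1-1) ≫ s2) :
    ∃ sn : X.X n ⟶ E.X n,
      sn ≫ g.f n = 𝟙 _ ∧ sn ≫ E.d n (n-1) = X.d n (n-1) ≫ s1 := by
  have hdeg : ∀ k : ℤ, ((ShortComplex.mk f g w).map
      (HomologicalComplex.eval V (ComplexShape.down ℤ) k)).ShortExact :=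
    (HomologicalComplex.shortExact_iff_degreewise_shortExact _).1 hSE
  have hw : ∀ k : ℤ, f.f k ≫ g.f k = 0 := by
    intro k
    rw [← HomologicalComplex.comp_f, w]
    rfl
  -- the retraction of `f.f (n-1)` induced by the partial splitting
  set u : E.X (n-1) ⟶ E.X (n-1) := 𝟙 _ - g.f (n-1) ≫ s1 with hu_def
  have hu : u ≫ g.f (n-1) = 0 := by
    simp [hu_def, Preadditive.sub_comp, Category.assoc, hs1]
  haveI : Mono ((ShortComplex.mk f g w).map
      (HomologicalComplex.eval V (ComplexShape.down ℤ) (n-1))).f := (hdeg (n-1)).mono_f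
  haveI : Mono (f.f (n-1)) := (hdeg (n-1)).mono_f
  haveI : Mono (f.f (n-2)) := (hdeg (n-2)).mono_f
  set r : E.X (n-1) ⟶ L.X (n-1) := (hdeg (n-1)).exact.lift u hu with hr_def
  have hrf : r ≫ f.f (n-1) = u := (hdeg (n-1)).exact.lift_f u hu
  have hfr : f.f (n-1) ≫ r = 𝟙 _ := by
    rw [← cancel_mono (f.f (n-1))]
    rw [Category.assoc, hrf, hu_def]
    simp [reassoc_of% (hw (n-1))]
  -- data for the modified complex
  set dIn : L.X (n+1) ⟶ E.X n := L.d (n+1) n ≫ f.f n with hdIn_def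
  set dOut : E.X n ⟶ L.X (n-1) := E.d n (n-1) ≫ r with hdOut_def
  have h1 : L.d (n+2) (n+1) ≫ dIn = 0 := by
    rw [hdIn_def, HomologicalComplex.d_comp_d_assoc, zero_comp]
  have h2 : dIn ≫ dOut = 0 := by
    simp [hdIn_def, hdOut_def, HomologicalComplex.Hom.comm_assoc]
  have e12 : (n:ℤ) - 1 - 1 = n - 2 := by omega
  have hs12' : s1 ≫ E.d (n-1) (n-2) = X.d (n-1) (n-2) ≫
      (eqToHom (congrArg X.X e12.symm) ≫ s2 ≫ eqToHom (congrArg E.X e12)) := by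
    rw [d_eq_d_comp E e12, d_eq_d_comp X e12, ← Category.assoc, hs12]
    simp [Category.assoc]
  have h3 : dOut ≫ L.d (n-1) (n-2) = 0 := by
    rw [← cancel_mono (f.f (n-2))]
    have hcomm : L.d (n-1) (n-2) ≫ f.f (n-2) = f.f (n-1) ≫ E.d (n-1) (n-2) :=
      (f.comm (n-1) (n-2)).symm
    rw [hdOut_def, Category.assoc, Category.assoc, hcomm, ← Category.assoc r,
      hrf, hu_def]
    simp only [Preadditive.sub_comp, Preadditive.comp_sub, Category.id_comp,
      Category.assoc, HomologicalComplex.d_comp_d, zero_comp, zero_sub, neg_eq_zero]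
    rw [hs12', ← reassoc_of% (g.comm n (n-1))]
    simp [HomologicalComplex.d_comp_d_assoc]
  -- maps for the short exact sequence ending in the sphere
  have hφ1 : L.d (n+1) n ≫ f.f n = dIn := rfl
  have hφ2 : f.f n ≫ dOut = L.d n (n-1) := by
    rw [hdOut_def, ← Category.assoc, f.comm n (n-1), Category.assoc, hfr, Category.comp_id]
  have hψ : dIn ≫ g.f n = 0 := by
    rw [hdIn_def, Category.assoc, hw n, comp_zero]
  have hφψ : f.f n ≫ g.f n = 0 := hw n
  have hdegn : (ShortComplex.mk (f.f n) (g.f n) hφψ).ShortExact := hdeg n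
  -- apply the Ext-vanishing hypothesis
  obtain ⟨σ, hσ⟩ := hext (Q L n (E.X n) dIn dOut h1 h2 h3)
    (Qι L n (E.X n) dIn dOut h1 h2 h3 (f.f n) hφ1 hφ2)
    (Qπ L n (E.X n) dIn dOut h1 h2 h3 (X.X n) (g.f n) hψ)
    (Qι_Qπ L n (E.X n) dIn dOut h1 h2 h3 (f.f n) hφ1 hφ2 (X.X n) (g.f n) hψ hφψ)
    (Q_shortExact L n (E.X n) dIn dOut h1 h2 h3 (f.f n) hφ1 hφ2 (X.X n) (g.f n) hψ hφψ hdegn)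
  -- extract the degree `n` component
  set sn : X.X n ⟶ E.X n :=
    (singleObjXSelf (ComplexShape.down ℤ) n (X.X n)).inv ≫ σ.f n ≫
      eqToHom (QX_eq L n (E.X n) rfl) with hsn_def
  have hσn : σ.f n ≫ (Qπ L n (E.X n) dIn dOut h1 h2 h3 (X.X n) (g.f n) hψ).f n = 𝟙 _ := by
    have := congrArg (fun τ => HomologicalComplex.Hom.f τ n) hσ
    simpa using this
  rw [Qπ_f, dif_pos rfl] at hσn
  simp only [eqToHom_refl, Category.comp_id] at hσn
  have hsec : sn ≫ g.f n = 𝟙 _ := by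
    rw [hsn_def]
    simp only [Category.assoc]
    rw [← cancel_mono ((singleObjXSelf (ComplexShape.down ℤ) n (X.X n)).inv)]
    simpa [Category.assoc] using congrArg
      (fun t => (singleObjXSelf (ComplexShape.down ℤ) n (X.X n)).inv ≫ t) hσn
  refine ⟨sn, hsec, ?_⟩
  -- the chain map condition in degree n
  have hcomm : σ.f n ≫ (Q L n (E.X n) dIn dOut h1 h2 h3).d n (n-1) = 0 := by
    have := σ.comm n (n-1)
    rw [single_obj_d, zero_comp] at this
    exact this
  have hQd : (Q L n (E.X n) dIn dOut h1 h2 h3).d n (n-1) =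
      eqToHom (QX_eq L n (E.X n) rfl) ≫ dOut ≫
        eqToHom ((congrArg L.X (show (n:ℤ)-1 = n-1 by omega)).trans
          (QX_ne L n (E.X n) (show (n:ℤ)-1 ≠ n by omega)).symm) := by
    show Qd L n (E.X n) dIn dOut n (n-1) = _
    rw [Qd, dif_pos (by omega), dif_pos rfl]
  rw [hQd] at hcomm
  -- cancel the invertible eqToHom on the right
  have hcomm2 : σ.f n ≫ eqToHom (QX_eq L n (E.X n) rfl) ≫ dOut = 0 := by
    have := congrArg (fun t => t ≫ eqToHom
      (((congrArg L.X (show (n:ℤ)-1 = n-1 by omega)).trans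
        (QX_ne L n (E.X n) (show (n:ℤ)-1 ≠ n by omega)).symm)).symm) hcomm
    simpa [Category.assoc] using this
  have hsnd : sn ≫ dOut = 0 := by
    rw [hsn_def]
    simp only [Category.assoc]
    rw [hcomm2, comp_zero]
  have hsnd' : sn ≫ E.d n (n-1) ≫ r = 0 := by
    rw [← hdOut_def]
    exact hsnd
  have h5 : sn ≫ E.d n (n-1) ≫ u = 0 := by
    rw [← hrf, show sn ≫ E.d n (n-1) ≫ r ≫ f.f (n-1) =
      (sn ≫ E.d n (n-1) ≫ r) ≫ f.f (n-1) by simp [Category.assoc], hsnd', zero_comp]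
  rw [hu_def] at h5
  have h6 : sn ≫ E.d n (n-1) = sn ≫ E.d n (n-1) ≫ g.f (n-1) ≫ s1 := by
    simp only [Preadditive.comp_sub, Category.comp_id, sub_eq_zero] at h5
    simpa [Category.assoc] using h5
  rw [h6, ← reassoc_of% (g.comm n (n-1)), reassoc_of% hsec]

/-- Recursively build a compatible family of degreewise splittings. -/
noncomputable def buildS (X E : ChainComplex V ℤ) (g : E ⟶ X) (N : ℤ)
    (hz : ∀ n < N, IsZero (X.X n))
    (step : ∀ (n : ℤ) (s1 : X.X (n-1) ⟶ E.X (n-1)) (s2 : X.X (n-1-1) ⟶ E.X (n-1-1)),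
      s1 ≫ g.f (n-1) = 𝟙 _ → s1 ≫ E.d (n-1) (n-1-1) = X.d (n-1) (n-1-1) ≫ s2 →
      ∃ sn : X.X n ⟶ E.X n, sn ≫ g.f n = 𝟙 _ ∧ sn ≫ E.d n (n-1) = X.d n (n-1) ≫ s1) :
    ∀ n : ℤ, {p : (X.X n ⟶ E.X n) × (X.X (n-1) ⟶ E.X (n-1)) //
      p.1 ≫ g.f n = 𝟙 _ ∧ p.1 ≫ E.d n (n-1) = X.d n (n-1) ≫ p.2} := fun n =>
  if h : n < N then
    ⟨(0, 0), by
      constructor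
      · rw [zero_comp]
        exact (hz n h).eq_of_src 0 (𝟙 _)
      · simp⟩
  else
    ⟨((step n (buildS X E g N hz step (n-1)).1.1 (buildS X E g N hz step (n-1)).1.2
        (buildS X E g N hz step (n-1)).2.1 (buildS X E g N hz step (n-1)).2.2).choose,
      (buildS X E g N hz step (n-1)).1.1),
      (step n (buildS X E g N hz step (n-1)).1.1 (buildS X E g N hz step (n-1)).1.2
        (buildS X E g N hz step (n-1)).2.1 (buildS X E g N hz step (n-1)).2.2).choose_spec⟩
  termination_by n => (n + 1 - N).toNat
  decreasing_by omega

lemma buildS_snd (X E : ChainComplex V ℤ) (g : E ⟶ X) (N : ℤ)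
    (hz : ∀ n < N, IsZero (X.X n))
    (step : ∀ (n : ℤ) (s1 : X.X (n-1) ⟶ E.X (n-1)) (s2 : X.X (n-1-1) ⟶ E.X (n-1-1)),
      s1 ≫ g.f (n-1) = 𝟙 _ → s1 ≫ E.d (n-1) (n-1-1) = X.d (n-1) (n-1-1) ≫ s2 →
      ∃ sn : X.X n ⟶ E.X n, sn ≫ g.f n = 𝟙 _ ∧ sn ≫ E.d n (n-1) = X.d n (n-1) ≫ s1)
    (n : ℤ) :
    (buildS X E g N hz step n).1.2 = (buildS X E g N hz step (n-1)).1.1 := by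
  by_cases h : n < N
  · rw [buildS, dif_pos h, buildS, dif_pos (show n - 1 < N by omega)]
  · rw [buildS, dif_neg h]

end CotorsionAux

theorem cotorsionPair_bddBelow_of_spheres
    [HasLimits A] [HasColimits A]
    (𝒳 𝒴 : Set (ChainComplex A ℤ))
    (h𝒳 : ∀ K, K ∈ 𝒳 ↔ ∀ L ∈ 𝒴, Ext1Vanishes K L)
    (h𝒴 : ∀ L, L ∈ 𝒴 ↔ ∀ K ∈ 𝒳, Ext1Vanishes K L)
    (𝒞 : Set A)
    (hS : ∀ (n : ℤ) (C : A), C ∈ 𝒞 → sphere A n C ∈ 𝒳)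
    (X : ChainComplex A ℤ) (hbdd : ∃ N : ℤ, ∀ n < N, IsZero (X.X n))
    (hcomp : ∀ n, X.X n ∈ 𝒞) :
    X ∈ 𝒳 := by
  classical
  obtain ⟨N, hN⟩ := hbdd
  rw [h𝒳]
  intro L hL
  intro E f g w hSE
  have hext : ∀ n : ℤ, CotorsionAux.Ext1Vanishes'
      ((HomologicalComplex.single A (ComplexShape.down ℤ) n).obj (X.X n)) L :=
    fun n => (h𝒳 _).1 (hS n (X.X n) (hcomp n)) L hL
  have step := fun (n : ℤ) (s1 : X.X (n-1) ⟶ E.X (n-1)) (s2 : X.X (n-1-1) ⟶ E.X (n-1-1))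
      (hs1 : s1 ≫ g.f (n-1) = 𝟙 _)
      (hs12 : s1 ≫ E.d (n-1) (n-1-1) = X.d (n-1) (n-1-1) ≫ s2) =>
    CotorsionAux.key_step X E L f g w hSE n (hext n) s1 s2 hs1 hs12
  set B := CotorsionAux.buildS X E g N hN step with hB
  refine ⟨{ f := fun n => (B n).1.1, comm' := ?_ }, ?_⟩
  · intro i j hij
    simp only [ComplexShape.down_Rel] at hij
    obtain rfl : j = i - 1 := by omega
    have h2 := (B i).2.2
    rw [hB, CotorsionAux.buildS_snd] at h2
    exact h2
  · apply HomologicalComplex.hom_ext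
    intro k
    simpa using (B k).2.1
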